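/- For any two nonzero vectors u and w in a finite-dimensional complex inner product space of dimension at least 2, there exists a unitary operator Ω with determinant 1 such that Ω u = (‖u‖/‖w‖) • w. -/

import Mathlib

/-- **Eq. (3.11).** For any two nonzero vectors `u` and `w` in a finite-dimensional complex
inner product space of dimension at least 2, there is a unitary operator with determinant 1
sending `u` to `(‖u‖/‖w‖) • w`. -/
theorem su_rotation_of_vacuum_perturbation
    {V : Type*} [NormedAddCommGroup V] [InnerProductSpace ℂ V] [FiniteDimensional ℂ V]
    (hdim : 2 ≤ Module.finrank ℂ V) (u w : V) (hu : u ≠ 0) (hw : w ≠ 0) :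
    ∃ Ω : V ≃ₗᵢ[ℂ] V, LinearMap.det Ω.toLinearEquiv.toLinearMap = 1 ∧
      Ω u = ((‖u‖ / ‖w‖ : ℝ) : ℂ) • w := by
  classical
  set n := Module.finrank ℂ V with hn
  have hcard : Module.finrank ℂ V = Fintype.card (Fin n) := by simp [hn]
  have h1n : 1 < n := hdim
  have h0n : 0 < n := by omega
  set i₀ : Fin n := ⟨0, h0n⟩ with hi₀
  set i₁ : Fin n := ⟨1, h1n⟩ with hi₁
  have hi₁0 : i₀ ≠ i₁ := by simp [hi₀, hi₁, Fin.ext_iff]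
  set e₀ : V := ((‖u‖ : ℂ))⁻¹ • u with he₀
  set f₀ : V := ((‖w‖ : ℂ))⁻¹ • w with hf₀
  have hne : ‖e₀‖ = 1 := norm_smul_inv_norm hu
  have hnf : ‖f₀‖ = 1 := norm_smul_inv_norm hw
  have hone : ∀ x : V, ‖x‖ = 1 →
      Orthonormal ℂ (({i₀} : Set (Fin n)).restrict fun _ => x) := by
    intro x hx
    refine ⟨fun i => hx, fun {i j} hij => absurd ?_ hij⟩
    ext
    rw [show (i : Fin n) = i₀ from i.2, show (j : Fin n) = i₀ from j.2]
  obtain ⟨b, hb⟩ := (hone e₀ hne).exists_orthonormalBasis_extension_of_card_eq hcard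
  obtain ⟨c, hc⟩ := (hone f₀ hnf).exists_orthonormalBasis_extension_of_card_eq hcard
  have hb0 : b i₀ = e₀ := hb i₀ rfl
  have hc0 : c i₀ = f₀ := hc i₀ rfl
  set δ : ℂ := b.toBasis.det ⇑c with hδ
  have hδnorm : ‖δ‖ = 1 := by rw [hδ]; exact b.det_to_matrix_orthonormalBasis c
  have hδ0 : δ ≠ 0 := by intro h; rw [h] at hδnorm; simp at hδnorm
  set d : Fin n → ℂˣ := fun i => if i = i₁ then Units.mk0 δ⁻¹ (inv_ne_zero hδ0) else 1 with hd
  have hdnorm : ∀ i, ‖(d i : ℂ)‖ = 1 := by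
    intro i
    by_cases h : i = i₁ <;> simp [hd, h, norm_inv, hδnorm]
  set cb : Module.Basis (Fin n) ℂ V := c.toBasis.unitsSMul d with hcb
  have hcbapp : ∀ i, cb i = (d i : ℂ) • c i := by
    intro i
    rw [hcb, Module.Basis.unitsSMul_apply, OrthonormalBasis.coe_toBasis, Units.smul_def]
  have hon : Orthonormal ℂ ⇑cb := by
    refine ⟨fun i => ?_, fun {i j} hij => ?_⟩
    · rw [hcbapp, norm_smul, hdnorm, one_mul, c.orthonormal.1]
    · show (inner ℂ (cb i) (cb j) : ℂ) = 0
      rw [hcbapp, hcbapp, inner_smul_left, inner_smul_right,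
        c.orthonormal.2 hij, mul_zero, mul_zero]
  set c' : OrthonormalBasis (Fin n) ℂ V := cb.toOrthonormalBasis hon with hc'
  have hc'app : ∀ i, c' i = (d i : ℂ) • c i := by
    intro i; rw [hc', Module.Basis.coe_toOrthonormalBasis, hcbapp]
  set Ω : V ≃ₗᵢ[ℂ] V := b.repr.trans c'.repr.symm with hΩ
  have hΩb : ∀ i, Ω (b i) = c' i := by
    intro i
    simp [hΩ, LinearIsometryEquiv.trans_apply]
  refine ⟨Ω, ?_, ?_⟩
  · have hdet := Module.Basis.det_comp_basis b.toBasis b.toBasis Ω.toLinearEquiv.toLinearMap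
    rw [Module.Basis.equiv_refl] at hdet
    simp only [LinearEquiv.refl_toLinearMap, LinearMap.comp_id] at hdet
    rw [← hdet]
    have hcomp : (⇑Ω.toLinearEquiv.toLinearMap ∘ ⇑b.toBasis) =
        Function.update ⇑c i₁ (δ⁻¹ • c i₁) := by
      funext i
      have : Ω.toLinearEquiv.toLinearMap (b.toBasis i) = Ω (b i) := by
        rw [OrthonormalBasis.coe_toBasis]; rfl
      rw [Function.comp_apply, this, hΩb, hc'app, Function.update_apply]
      by_cases h : i = i₁ <;> simp [hd, h]
    rw [hcomp]
    have hms := (b.toBasis.det : AlternatingMap ℂ V ℂ (Fin n)).map_update_smul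
      ⇑c i₁ δ⁻¹ (c i₁)
    rw [Function.update_eq_self] at hms
    rw [hms, ← hδ, smul_eq_mul, inv_mul_cancel₀ hδ0]
  · have hu' : u = (‖u‖ : ℂ) • b i₀ := by
      rw [hb0, he₀, smul_smul, mul_inv_cancel₀ (by exact_mod_cast norm_ne_zero_iff.mpr hu),
        one_smul]
    rw [show Ω u = Ω ((‖u‖ : ℂ) • b i₀) from by rw [← hu'], map_smul, hΩb, hc'app, hd]
    simp only [if_neg hi₁0, Units.val_one, one_smul]
    rw [hc0, hf₀, smul_smul, Complex.ofReal_div, div_eq_mul_inv]
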